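/- Let z, w be points of the unit disc with 1-|w| ≤ (1-|z|)/(4(1+|z|)). Then -log|(z-w)/(1-w̄z)| ≤ 2·((1+|z|)/(1-|z|))·(1-|w|). -/

import Mathlib

set_option maxHeartbeats 1000000


/-- If `1 - |w| ≤ (1-|z|)/(4(1+|z|))` for points of the unit disc, then
`-log|(z-w)/(1-conj w · z)| ≤ 2 ((1+|z|)/(1-|z|)) (1-|w|)`. -/
theorem stmt_5 (z w : ℂ) (hz : ‖z‖ < 1) (hw : ‖w‖ < 1)
    (h : 1 - ‖w‖ ≤ (1 - ‖z‖) / (4 * (1 + ‖z‖))) :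
    -Real.log (‖(z - w) / (1 - (starRingEnd ℂ) w * z)‖)
      ≤ 2 * ((1 + ‖z‖) / (1 - ‖z‖)) * (1 - ‖w‖) := by
  have ha0 : (0:ℝ) ≤ ‖z‖ := norm_nonneg z
  have hb0 : (0:ℝ) ≤ ‖w‖ := norm_nonneg w
  have h1a : 0 < 1 - ‖z‖ := by linarith
  have h1a' : 0 < 1 + ‖z‖ := by linarith
  have h1b : 0 ≤ 1 - ‖w‖ := by linarith
  have hkey : 4 * (1 + ‖z‖) * (1 - ‖w‖) ≤ 1 - ‖z‖ := by
    have h4 : 0 < 4 * (1 + ‖z‖) := by positivity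
    have := (le_div_iff₀ h4).mp h
    nlinarith [this]
  have hdlb : 1 - ‖z‖ ≤ ‖1 - (starRingEnd ℂ) w * z‖ := by
    have h2 := norm_sub_norm_le (1:ℂ) ((starRingEnd ℂ) w * z)
    simp only [norm_mul, Complex.norm_conj, norm_one] at h2
    nlinarith [h2, mul_nonneg hb0 h1a.le]
  have hd0 : 0 < ‖1 - (starRingEnd ℂ) w * z‖ := lt_of_lt_of_le h1a hdlb
  have hident : ‖1 - (starRingEnd ℂ) w * z‖ ^ 2 - ‖z - w‖ ^ 2
      = (1 - ‖z‖ ^ 2) * (1 - ‖w‖ ^ 2) := by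
    rw [Complex.sq_norm, Complex.sq_norm, Complex.sq_norm, Complex.sq_norm]
    simp only [Complex.normSq_apply, Complex.sub_re, Complex.sub_im, Complex.mul_re,
      Complex.mul_im, Complex.one_re, Complex.one_im, Complex.conj_re, Complex.conj_im]
    ring
  set u := ‖(z - w) / (1 - (starRingEnd ℂ) w * z)‖ with hu
  have huval : u = ‖z - w‖ / ‖1 - (starRingEnd ℂ) w * z‖ := by
    rw [hu, norm_div]
  set B := 2 * ((1 + ‖z‖) / (1 - ‖z‖)) * (1 - ‖w‖) with hB
  clear_value u B
  have hB2 : B * (1 - ‖z‖) = 2 * (1 + ‖z‖) * (1 - ‖w‖) := by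
    rw [hB]; field_simp
  have hB0 : 0 ≤ B := by
    rw [hB]
    have h1 : 0 ≤ (1 + ‖z‖) / (1 - ‖z‖) := by positivity
    nlinarith
  have hBhalf : B ≤ 1 / 2 := by
    rw [← mul_le_mul_iff_of_pos_right h1a, hB2]
    nlinarith [hkey]
  have hDpos : 0 < ‖1 - (starRingEnd ℂ) w * z‖ ^ 2 := by positivity
  have h1u : 1 - u ^ 2 = ((1 - ‖z‖ ^ 2) * (1 - ‖w‖ ^ 2))
      / ‖1 - (starRingEnd ℂ) w * z‖ ^ 2 := by
    rw [huval, div_pow, ← hident]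
    rw [sub_div, div_self hDpos.ne']
  have hNnn : 0 ≤ (1 - ‖z‖ ^ 2) * (1 - ‖w‖ ^ 2) := by
    have e1 : 0 ≤ 1 - ‖z‖ ^ 2 := by nlinarith
    have e2 : 0 ≤ 1 - ‖w‖ ^ 2 := by nlinarith
    exact mul_nonneg e1 e2
  have hmain : 1 - u ^ 2 ≤ B := by
    rw [h1u, div_le_iff₀ hDpos]
    have hD : (1 - ‖z‖) ^ 2 ≤ ‖1 - (starRingEnd ℂ) w * z‖ ^ 2 := by
      nlinarith [hdlb]
    have hN : (1 - ‖z‖ ^ 2) * (1 - ‖w‖ ^ 2)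
        ≤ B * (1 - ‖z‖) ^ 2 := by
      have : B * (1 - ‖z‖) ^ 2
          = (2 * (1 + ‖z‖) * (1 - ‖w‖)) * (1 - ‖z‖) := by
        rw [← hB2]; ring
      rw [this]
      nlinarith [mul_nonneg (mul_nonneg (mul_nonneg h1a.le h1a'.le) h1b) h1b]
    refine hN.trans ?_
    exact mul_le_mul_of_nonneg_left hD hB0
  have hu1 : 1 - u ^ 2 ≥ 0 := by rw [h1u]; positivity
  have hupos : 0 < u ^ 2 := by nlinarith [hBhalf, hmain]
  have hu2 : 1 / 2 ≤ u ^ 2 := by linarith [hBhalf, hmain]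
  have hlog : -Real.log (u ^ 2) ≤ (1 - u ^ 2) / u ^ 2 := by
    have h3 := Real.log_le_sub_one_of_pos (x := (u ^ 2)⁻¹) (by positivity)
    rw [Real.log_inv] at h3
    rw [div_eq_mul_inv, sub_mul, one_mul, mul_inv_cancel₀ hupos.ne']
    linarith [h3]
  have hlog2 : -Real.log u ≤ 1 - u ^ 2 := by
    have hp : Real.log (u ^ 2) = 2 * Real.log u := by
      rw [Real.log_pow]; push_cast; ring
    rw [hp] at hlog
    have h4 : (1 - u ^ 2) / u ^ 2 ≤ 2 * (1 - u ^ 2) := by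
      rw [div_le_iff₀ hupos]
      nlinarith [hu2, hu1]
    linarith
  linarith [hmain, hlog2]
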